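/- Gradient-tracking consensus error bound: with y^{k+1} = Wy^k + ∇f(x^{k+1}) - ∇f(x^k), where ∇f applies the L-Lipschitz gradients coordinatewise, ŷ^k = (I - 11ᵀ/n)y^k, and x̄^{k+1} - x̄^k = -(1/n)11ᵀ(α^k ⊙ y^k), one has ‖ŷ^{k+1}‖ ≤ λ‖ŷ^k‖ + L(‖x̂^{k+1}‖ + ‖(1/n)11ᵀ(α^k ⊙ y^k)‖ + ‖x̂^k‖), provided ‖W - 11ᵀ/n‖ ≤ λ. -/

import Mathlib

private lemma euclid_norm_mono {n : ℕ} (u v : EuclideanSpace ℝ (Fin n))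
    (h : ∀ i, |u i| ≤ |v i|) : ‖u‖ ≤ ‖v‖ := by
  rw [EuclideanSpace.norm_eq, EuclideanSpace.norm_eq]
  apply Real.sqrt_le_sqrt
  apply Finset.sum_le_sum
  intro i _
  have := h i
  simp only [Real.norm_eq_abs]
  nlinarith [abs_nonneg (u i)]

private lemma euclid_sub_avg_le {n : ℕ} (u : EuclideanSpace ℝ (Fin n)) :
    ‖u - (WithLp.equiv 2 (Fin n → ℝ)).symm (fun _ => (∑ i, u i)/n)‖ ≤ ‖u‖ := by
  rw [EuclideanSpace.norm_eq, EuclideanSpace.norm_eq]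
  apply Real.sqrt_le_sqrt
  simp only [PiLp.sub_apply, WithLp.equiv_symm_apply, PiLp.toLp_apply, Real.norm_eq_abs, sq_abs]
  rcases Nat.eq_zero_or_pos n with hn | hn
  · subst hn; simp
  set c : ℝ := (∑ i, u i)/n with hc
  have hs : ∑ i, u i = n * c := by rw [hc]; field_simp
  have expand : ∑ i, (u i - c)^2 = (∑ i, (u i)^2) - 2*c*(∑ i, u i) + n * c^2 := by
    have : ∀ i, (u i - c)^2 = (u i)^2 - 2*c*(u i) + c^2 := by intro i; ring
    simp only [this, Finset.sum_add_distrib, Finset.sum_sub_distrib, ← Finset.mul_sum]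
    simp [Finset.card_univ]
  rw [expand, hs]
  nlinarith [mul_nonneg (Nat.cast_nonneg (α := ℝ) n) (sq_nonneg c)]



/-- Gradient-tracking consensus error bound: with
`y^{k+1} = Wy^k + ∇f(x^{k+1}) - ∇f(x^k)` where `∇f` applies the `L`-Lipschitz
local derivatives coordinatewise, `‖W - 11ᵀ/n‖ ≤ λ` (spectral norm), and
`x̄^{k+1} - x̄^k = -(1/n)11ᵀ(α^k ⊙ y^k)`, one has
`‖ŷ^{k+1}‖ ≤ λ‖ŷ^k‖ + L(‖x̂^{k+1}‖ + ‖(1/n)11ᵀ(α^k ⊙ y^k)‖ + ‖x̂^k‖)`. -/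
theorem consensus_error_bound_y (n : ℕ) (hn : 0 < n)
    (W : Matrix (Fin n) (Fin n) ℝ)
    (hnonneg : ∀ i j, 0 ≤ W i j)
    (hrow : ∀ i, ∑ j, W i j = 1)
    (hcol : ∀ j, ∑ i, W i j = 1)
    (lam L : ℝ) (hL : 0 ≤ L)
    (hWtilde : ‖Matrix.toEuclideanCLM (𝕜 := ℝ) (n := Fin n)
        (W - (n : ℝ)⁻¹ • Matrix.of (fun _ _ => (1 : ℝ)))‖ ≤ lam)
    (g : Fin n → ℝ → ℝ)
    (hg : ∀ i a b, |g i a - g i b| ≤ L * |a - b|)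
    (x x' y y' α : EuclideanSpace ℝ (Fin n))
    (hy' : y' = Matrix.toEuclideanCLM (𝕜 := ℝ) (n := Fin n) W y
        + ((WithLp.equiv 2 (Fin n → ℝ)).symm fun i => g i (x' i))
        - ((WithLp.equiv 2 (Fin n → ℝ)).symm fun i => g i (x i)))
    (xbar x'bar ybar y'bar : EuclideanSpace ℝ (Fin n))
    (hxbar : xbar = WithLp.toLp 2 (fun _ => (∑ i, x i) / n))
    (hx'bar : x'bar = WithLp.toLp 2 (fun _ => (∑ i, x' i) / n))
    (hybar : ybar = WithLp.toLp 2 (fun _ => (∑ i, y i) / n))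
    (hy'bar : y'bar = WithLp.toLp 2 (fun _ => (∑ i, y' i) / n))
    (hxstep : x'bar - xbar
      = -((WithLp.equiv 2 (Fin n → ℝ)).symm fun _ => (∑ i, α i * y i) / n)) :
    ‖y' - y'bar‖ ≤ lam * ‖y - ybar‖
      + L * (‖x' - x'bar‖
        + ‖(WithLp.equiv 2 (Fin n → ℝ)).symm fun _ => (∑ i, α i * y i) / n‖
        + ‖x - xbar‖) := by
  have hn' : (n : ℝ) ≠ 0 := Nat.cast_ne_zero.mpr hn.ne'
  set M := Matrix.toEuclideanCLM (𝕜 := ℝ) (n := Fin n)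
      (W - (n : ℝ)⁻¹ • Matrix.of (fun _ _ => (1 : ℝ))) with hM
  set h : EuclideanSpace ℝ (Fin n) :=
      (WithLp.equiv 2 (Fin n → ℝ)).symm (fun i => g i (x' i) - g i (x i)) with hh
  set v : EuclideanSpace ℝ (Fin n) :=
      (WithLp.equiv 2 (Fin n → ℝ)).symm (fun _ => (∑ i, α i * y i) / n) with hv
  -- the vector of applied W : coordinates
  have hWy : ∀ i, (Matrix.toEuclideanCLM (𝕜 := ℝ) (n := Fin n) W y) i
      = ∑ j, W i j * y j := by
    intro i
    have := Matrix.ofLp_toEuclideanCLM (𝕜 := ℝ) (n := Fin n) W y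
    have := congrFun this i
    simpa [Matrix.mulVec, dotProduct] using this
  have hMy : ∀ i, (M (y - ybar)) i = (∑ j, W i j * y j) - (∑ j, y j)/n := by
    intro i
    have h2 := congrFun (Matrix.ofLp_toEuclideanCLM (𝕜 := ℝ) (n := Fin n)
      (W - (n : ℝ)⁻¹ • Matrix.of (fun _ _ => (1 : ℝ))) (y - ybar)) i
    simp only [Matrix.toLin'_apply, Matrix.mulVec, dotProduct, Matrix.sub_apply,
      Matrix.smul_apply, Matrix.of_apply, smul_eq_mul, mul_one, PiLp.sub_apply] at h2
    rw [← hM] at h2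
    rw [h2, hybar]
    have expand : ∀ j, (W i j - (n:ℝ)⁻¹) * (y j - (∑ k, y k)/n)
        = W i j * y j - ((∑ k, y k)/n) * W i j - (n:ℝ)⁻¹ * y j
          + (n:ℝ)⁻¹ * ((∑ k, y k)/n) := by intro j; ring
    simp only [expand, Finset.sum_add_distrib, Finset.sum_sub_distrib,
      ← Finset.mul_sum, hrow i]
    simp [Finset.card_univ]
    field_simp
    ring
  -- sum of y' coordinates
  have hsumy' : ∑ i, y' i = (∑ j, y j) + ∑ i, (g i (x' i) - g i (x i)) := by
    have : ∀ i, y' i = (∑ j, W i j * y j) + (g i (x' i) - g i (x i)) := by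
      intro i
      rw [hy']
      simp only [PiLp.sub_apply, PiLp.add_apply, WithLp.equiv_symm_apply, PiLp.toLp_apply, hWy i]
      ring
    simp only [this, Finset.sum_add_distrib]
    congr 1
    rw [Finset.sum_comm]
    simp only [← Finset.sum_mul, hcol]
    simp
  -- key identity
  have key : y' - y'bar = M (y - ybar)
      + (h - (WithLp.equiv 2 (Fin n → ℝ)).symm (fun _ => (∑ i, h i)/n)) := by
    have hyco : ∀ i, y' i = (∑ j, W i j * y j) + (g i (x' i) - g i (x i)) := by
      intro i
      rw [hy']
      simp only [PiLp.sub_apply, PiLp.add_apply, WithLp.equiv_symm_apply, PiLp.toLp_apply, hWy i]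
      ring
    ext i
    have hhco : ∀ j, h j = g j (x' j) - g j (x j) := fun j => rfl
    have hlhs : (y' - y'bar) i = y' i - y'bar i := rfl
    rw [hlhs, hy'bar]
    show y' i - (∑ j, y' j) / n = _
    rw [hsumy', hyco i]
    simp only [PiLp.sub_apply, PiLp.add_apply, WithLp.equiv_symm_apply, PiLp.toLp_apply, hMy i, hhco]
    ring
  rw [key]
  have hb1 : ‖M (y - ybar)‖ ≤ lam * ‖y - ybar‖ := by
    calc ‖M (y - ybar)‖ ≤ ‖M‖ * ‖y - ybar‖ := M.le_opNorm _
    _ ≤ lam * ‖y - ybar‖ := by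
        apply mul_le_mul_of_nonneg_right _ (norm_nonneg _)
        rw [hM]; exact hWtilde
  have hb2 : ‖h - (WithLp.equiv 2 (Fin n → ℝ)).symm (fun _ => (∑ i, h i)/n)‖ ≤ ‖h‖ :=
    euclid_sub_avg_le h
  have hb3 : ‖h‖ ≤ L * ‖x' - x‖ := by
    have : L * ‖x' - x‖ = ‖L • (x' - x)‖ := by
      rw [norm_smul, Real.norm_eq_abs, abs_of_nonneg hL]
    rw [this]
    apply euclid_norm_mono
    intro i
    have : h i = g i (x' i) - g i (x i) := rfl
    rw [this]
    have h2 : (L • (x' - x)) i = L * (x' i - x i) := rfl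
    rw [h2, abs_mul, abs_of_nonneg hL]
    exact le_trans (hg i (x' i) (x i)) (le_of_eq rfl)
  have hb4 : ‖x' - x‖ ≤ ‖x' - x'bar‖ + ‖v‖ + ‖x - xbar‖ := by
    have hid : x' - x = (x' - x'bar) + (x'bar - xbar) + (xbar - x) := by abel
    rw [hid]
    calc ‖(x' - x'bar) + (x'bar - xbar) + (xbar - x)‖
        ≤ ‖(x' - x'bar) + (x'bar - xbar)‖ + ‖xbar - x‖ := norm_add_le _ _
      _ ≤ ‖x' - x'bar‖ + ‖x'bar - xbar‖ + ‖xbar - x‖ := by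
          gcongr; exact norm_add_le _ _
      _ = ‖x' - x'bar‖ + ‖v‖ + ‖x - xbar‖ := by
          rw [hxstep, norm_neg, norm_sub_rev xbar x]
  calc ‖M (y - ybar) + (h - (WithLp.equiv 2 (Fin n → ℝ)).symm (fun _ => (∑ i, h i)/n))‖
      ≤ ‖M (y - ybar)‖ + ‖h - (WithLp.equiv 2 (Fin n → ℝ)).symm (fun _ => (∑ i, h i)/n)‖ :=
        norm_add_le _ _
    _ ≤ lam * ‖y - ybar‖ + L * (‖x' - x'bar‖ + ‖v‖ + ‖x - xbar‖) := by
        apply add_le_add hb1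
        calc _ ≤ ‖h‖ := hb2
          _ ≤ L * ‖x' - x‖ := hb3
          _ ≤ L * (‖x' - x'bar‖ + ‖v‖ + ‖x - xbar‖) := by
              apply mul_le_mul_of_nonneg_left hb4 hL
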